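/- Let A and M be real symmetric n×n matrices such that A is positive definite, M is positive semidefinite, and A·M = M·A. Then for every real symmetric n×n matrix η one has tr(M·A) · tr(M · η · A⁻¹ · η) ≥ (tr(M·η))². (This is the invariant matrix form of the paper's inequality (f^{ik} b^{jl} − f^{ij} f^{kl}/f) η_{ij} η_{kl} ≥ 0, with A the second fundamental form, b = A⁻¹, M = (f^{ij}) the derivative of a monotone 1-homogeneous curvature function, and f = tr(M·A) by Euler's identity.) -/

import Mathlib

open Matrix
open scoped MatrixOrder

theorem stmt_1 (n : ℕ) (A M : Matrix (Fin n) (Fin n) ℝ)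
    (hA : A.IsSymm) (hM : M.IsSymm)
    (hApd : A.PosDef) (hMpsd : M.PosSemidef)
    (hcomm : A * M = M * A)
    (η : Matrix (Fin n) (Fin n) ℝ) (hη : η.IsSymm) :
    ((M * η).trace) ^ 2 ≤ (M * A).trace * (M * η * A⁻¹ * η).trace := by
  classical
  have hAinv : (A⁻¹).PosSemidef := (hApd.inv).posSemidef
  set S : Matrix (Fin n) (Fin n) ℝ := CFC.sqrt M with hSdef
  set T : Matrix (Fin n) (Fin n) ℝ := CFC.sqrt A⁻¹ with hTdef
  have hSS : S * S = M := CFC.sqrt_mul_sqrt_self M hMpsd.nonneg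
  have hTT : T * T = A⁻¹ := CFC.sqrt_mul_sqrt_self A⁻¹ hAinv.nonneg
  have hSsymm : Sᵀ = S := by
    rw [← conjTranspose_eq_transpose_of_trivial]; exact (CFC.sqrt_nonneg M).posSemidef.1
  have hTsymm : Tᵀ = T := by
    rw [← conjTranspose_eq_transpose_of_trivial]; exact (CFC.sqrt_nonneg A⁻¹).posSemidef.1
  have hηt : ηᵀ = η := hη
  have hAt : Aᵀ = A := hA
  have hAinvA : A * A⁻¹ = 1 :=
    mul_nonsing_inv A (isUnit_iff_ne_zero.mpr hApd.det_pos.ne')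
  have key2 : ∀ X : Matrix (Fin n) (Fin n) ℝ, T * (T * X) = A⁻¹ * X := by
    intro X; rw [← Matrix.mul_assoc, hTT]
  have key : ∀ X : Matrix (Fin n) (Fin n) ℝ, A * (T * (T * X)) = X := by
    intro X; rw [key2, ← Matrix.mul_assoc, hAinvA, Matrix.one_mul]
  set P : Matrix (Fin n) (Fin n) ℝ := S * η * T with hPdef
  set Q : Matrix (Fin n) (Fin n) ℝ := S * A * T with hQdef
  -- trace identities
  have h1 : (Q * Pᵀ).trace = (M * η).trace := by
    have e : Q * Pᵀ = S * η * S := by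
      rw [hPdef, hQdef, transpose_mul, transpose_mul, hSsymm, hTsymm]
      simp only [Matrix.mul_assoc]
      rw [key, hηt]
    rw [e, trace_mul_comm, ← Matrix.mul_assoc, hSS]
  have h2 : (Q * Qᵀ).trace = (M * A).trace := by
    have e : Q * Qᵀ = S * A * S := by
      rw [hQdef, transpose_mul, transpose_mul, hSsymm, hTsymm]
      simp only [Matrix.mul_assoc]
      rw [key, hAt]
    rw [e, trace_mul_comm, ← Matrix.mul_assoc, hSS]
  have h3 : (P * Pᵀ).trace = (M * η * A⁻¹ * η).trace := by
    have e : P * Pᵀ = S * η * A⁻¹ * η * S := by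
      rw [hPdef, transpose_mul, transpose_mul, hSsymm, hTsymm]
      simp only [Matrix.mul_assoc]
      rw [key2, hηt]
    rw [e, trace_mul_comm]
    simp only [← Matrix.mul_assoc, hSS]
  rw [← h1, ← h2, ← h3]
  -- Cauchy–Schwarz via entrywise sums
  have entry : ∀ X Y : Matrix (Fin n) (Fin n) ℝ,
      (X * Yᵀ).trace = ∑ p : Fin n × Fin n, X p.1 p.2 * Y p.1 p.2 := by
    intro X Y
    simp [Matrix.trace, Matrix.diag, Matrix.mul_apply, Matrix.transpose_apply,
      Fintype.sum_prod_type]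
  rw [entry, entry, entry]
  have := Finset.sum_mul_sq_le_sq_mul_sq Finset.univ
    (fun p : Fin n × Fin n => Q p.1 p.2) (fun p : Fin n × Fin n => P p.1 p.2)
  simpa [pow_two] using this
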